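/- For every positive integer k, there exists a connected graph G with metric dimension exactly k that contains the complete graph K_{2^k} as a subgraph. Concretely: take a clique on vertex set {0,1}^k, add k new vertices u_1,...,u_k, and join u_i to each clique vertex v whose i-th coordinate is 0; then {u_1,...,u_k} is a resolving set, and since the graph contains K_{2^k}, its metric dimension is exactly k. -/

import Mathlib

open SimpleGraph Finset

/-- Distance from an edge (as an unordered pair) to a vertex: the minimum
of the distances from the two endpoints. -/
noncomputable def edgeVertexDist {V : Type*} (G : SimpleGraph V) (e : Sym2 V) (v : V) : ℕ :=
  Sym2.lift ⟨fun x y => min (G.dist x v) (G.dist y v), fun x y => by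
    simp [min_comm]⟩ e

/-- `S` is a resolving set for the vertices of `G`. -/
def IsResolvingSet {V : Type*} (G : SimpleGraph V) (S : Set V) : Prop :=
  ∀ u w : V, (∀ s ∈ S, G.dist u s = G.dist w s) → u = w

/-- `S` is a resolving set for the edges of `G`. -/
def IsEdgeResolvingSet {V : Type*} (G : SimpleGraph V) (S : Set V) : Prop :=
  ∀ e ∈ G.edgeSet, ∀ f ∈ G.edgeSet,
    (∀ s ∈ S, edgeVertexDist G e s = edgeVertexDist G f s) → e = f

/-- The metric dimension of `G`. -/
noncomputable def metricDim {V : Type*} (G : SimpleGraph V) : ℕ :=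
  sInf {k | ∃ S : Finset V, S.card = k ∧ IsResolvingSet G (S : Set V)}

/-- The edge metric dimension of `G`. -/
noncomputable def edgeMetricDim {V : Type*} (G : SimpleGraph V) : ℕ :=
  sInf {k | ∃ S : Finset V, S.card = k ∧ IsEdgeResolvingSet G (S : Set V)}

section Aux

variable (k : ℕ)

/-- The vertex set: clique vertices plus extra vertices. -/
abbrev VK := (Fin k → Bool) ⊕ Fin k

def GK : SimpleGraph (VK k) where
  Adj x y := match x, y with
    | .inl v, .inl w => v ≠ w
    | .inl v, .inr i => v i = false
    | .inr i, .inl v => v i = false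
    | .inr _, .inr _ => False
  symm := ⟨by rintro (v|i) (w|j) h <;> simp_all <;> exact Ne.symm h⟩
  loopless := ⟨by rintro (v|i) h <;> simp_all⟩

variable {k}

lemma gk_adj_inl_inl {v w : Fin k → Bool} (h : v ≠ w) :
    (GK k).Adj (Sum.inl v) (Sum.inl w) := h

lemma gk_adj_inl_inr {v : Fin k → Bool} {i : Fin k} (h : v i = false) :
    (GK k).Adj (Sum.inl v) (Sum.inr i) := h

lemma gk_not_adj_inr_inr {i j : Fin k} : ¬ (GK k).Adj (Sum.inr i) (Sum.inr j) := id

/-- all-false vector -/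
def zv (k : ℕ) : Fin k → Bool := fun _ => false

lemma reachable_zero (x : VK k) : (GK k).Reachable (Sum.inl (zv k)) x := by
  match x with
  | .inl v =>
    by_cases h : zv k = v
    · rw [h]
    · exact (gk_adj_inl_inl h).reachable
  | .inr i => exact (gk_adj_inl_inr (rfl : zv k i = false)).reachable

lemma gk_connected : (GK k).Connected := by
  rw [connected_iff]
  exact ⟨fun x y => (reachable_zero x).symm.trans (reachable_zero y), ⟨Sum.inl (zv k)⟩⟩

lemma dist_inl_inl {v w : Fin k → Bool} (h : v ≠ w) :
    (GK k).dist (Sum.inl v) (Sum.inl w) = 1 :=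
  dist_eq_one_iff_adj.mpr (gk_adj_inl_inl h)

lemma dist_inl_inr_false {v : Fin k → Bool} {i : Fin k} (h : v i = false) :
    (GK k).dist (Sum.inl v) (Sum.inr i) = 1 :=
  dist_eq_one_iff_adj.mpr (gk_adj_inl_inr h)

lemma dist_inl_inr_true {v : Fin k → Bool} {i : Fin k} (h : v i = true) :
    (GK k).dist (Sum.inl v) (Sum.inr i) = 2 := by
  have hne : v ≠ zv k := fun he => by simp [he, zv] at h
  have h2 : (GK k).dist (Sum.inl v) (Sum.inr i) ≤ 2 := by
    simpa using SimpleGraph.dist_le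
      ((gk_adj_inl_inl hne).toWalk.append (gk_adj_inl_inr (rfl : zv k i = false)).toWalk)
  have h0 : (GK k).dist (Sum.inl v) (Sum.inr i) ≠ 0 := by
    intro h0
    exact (by simp : (Sum.inl v : VK k) ≠ Sum.inr i) (gk_connected.dist_eq_zero_iff.mp h0)
  have h1 : (GK k).dist (Sum.inl v) (Sum.inr i) ≠ 1 := by
    intro h1
    have hadj := dist_eq_one_iff_adj.mp h1
    rw [show ((GK k).Adj (Sum.inl v) (Sum.inr i)) = (v i = false) from rfl] at hadj
    simp [h] at hadj
  omega

lemma dist_inr_inr {i j : Fin k} (h : i ≠ j) :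
    (GK k).dist (Sum.inr i) (Sum.inr j) = 2 := by
  have h2 : (GK k).dist (Sum.inr i) (Sum.inr j) ≤ 2 := by
    simpa using SimpleGraph.dist_le
      (((GK k).adj_symm (gk_adj_inl_inr (rfl : zv k i = false))).toWalk.append
        (gk_adj_inl_inr (rfl : zv k j = false)).toWalk)
  have h0 : (GK k).dist (Sum.inr i) (Sum.inr j) ≠ 0 := by
    intro h0
    exact (by simp [h] : (Sum.inr i : VK k) ≠ Sum.inr j) (gk_connected.dist_eq_zero_iff.mp h0)
  have h1 : (GK k).dist (Sum.inr i) (Sum.inr j) ≠ 1 := fun h1 =>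
    gk_not_adj_inr_inr (dist_eq_one_iff_adj.mp h1)
  omega

lemma dist_inl_inr_mem {v : Fin k → Bool} {i : Fin k} :
    (GK k).dist (Sum.inl v) (Sum.inr i) = 1 ∨ (GK k).dist (Sum.inl v) (Sum.inr i) = 2 := by
  cases hv : v i
  · exact Or.inl (dist_inl_inr_false hv)
  · exact Or.inr (dist_inl_inr_true hv)

end Aux

section Main

variable {k : ℕ}

lemma gk_resolving :
    IsResolvingSet (GK k)
      ((Finset.univ.image (Sum.inr : Fin k → VK k) : Finset (VK k)) : Set (VK k)) := by
  intro u w h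
  have h' : ∀ i : Fin k, (GK k).dist u (Sum.inr i) = (GK k).dist w (Sum.inr i) := fun i =>
    h (Sum.inr i) (by simp)
  match u, w with
  | .inl v, .inl v' =>
    congr 1
    funext i
    have hi := h' i
    cases hv : v i <;> cases hv' : v' i
    · rfl
    · rw [dist_inl_inr_false hv, dist_inl_inr_true hv'] at hi; omega
    · rw [dist_inl_inr_true hv, dist_inl_inr_false hv'] at hi; omega
    · rfl
  | .inl v, .inr j =>
    exfalso
    have hi := h' j
    rw [SimpleGraph.dist_self] at hi
    rcases dist_inl_inr_mem (v := v) (i := j) with h1 | h1 <;> omega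
  | .inr j, .inl v =>
    exfalso
    have hi := (h' j).symm
    rw [SimpleGraph.dist_self] at hi
    rcases dist_inl_inr_mem (v := v) (i := j) with h1 | h1 <;> omega
  | .inr i, .inr j =>
    by_contra hne
    have hij : j ≠ i := fun he => hne (by rw [he])
    have hi := h' i
    rw [SimpleGraph.dist_self, dist_inr_inr hij] at hi
    omega

lemma gk_lower (T : Finset (VK k)) (hT : IsResolvingSet (GK k) (T : Set (VK k))) :
    k ≤ T.card := by
  by_contra hlt
  push_neg at hlt
  set m := T.card with hm
  classical
  set A : Finset (Fin k → Bool) := Finset.univ.filter (fun v => Sum.inl v ∉ T) with hA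
  set f : (Fin k → Bool) → (↥T → Bool) :=
    fun v s => decide ((GK k).dist (Sum.inl v) (s : VK k) = 2) with hf
  -- f is injective on A
  have hinj : Set.InjOn f (A : Set (Fin k → Bool)) := by
    intro v hv v' hv' hfe
    simp only [hA, Finset.coe_filter, Set.mem_setOf_eq, Finset.mem_filter] at hv hv'
    have : ∀ s ∈ T, (GK k).dist (Sum.inl v) s = (GK k).dist (Sum.inl v') s := by
      intro s hs
      match s with
      | .inl w =>
        have h1 : v ≠ w := fun he => hv.2 (he ▸ hs)
        have h2 : v' ≠ w := fun he => hv'.2 (he ▸ hs)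
        rw [dist_inl_inl h1, dist_inl_inl h2]
      | .inr i =>
        have he := congrFun hfe (⟨Sum.inr i, hs⟩ : ↥T)
        simp only [hf, decide_eq_decide] at he
        rcases dist_inl_inr_mem (v := v) (i := i) with h1 | h1 <;>
          rcases dist_inl_inr_mem (v := v') (i := i) with h2 | h2 <;> omega
    have := hT (Sum.inl v) (Sum.inl v') (fun s hs => this s hs)
    exact Sum.inl_injective this
  have hcardA : A.card ≤ 2 ^ m := by
    have := Finset.card_le_card_of_injOn f (fun x _ => Finset.mem_univ (f x)) hinj
    simpa [Fintype.card_fun] using this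
  have hcardB : (Finset.univ.filter (fun v : Fin k → Bool => Sum.inl v ∈ T)).card ≤ m := by
    refine Finset.card_le_card_of_injOn Sum.inl (fun x hx => ?_) ?_
    · simp only [Finset.mem_coe, Finset.mem_filter] at hx; exact hx.2
    · intro x _ y _ h; exact Sum.inl_injective h
  have hsplit : (Finset.univ.filter (fun v : Fin k → Bool => Sum.inl v ∈ T)).card + A.card
      = 2 ^ k := by
    rw [hA, Finset.card_filter_add_card_filter_not]
    simp [Fintype.card_fun]
  have hk1 : 1 ≤ k := by omega
  have hmle : m ≤ k - 1 := by omega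
  have h2m : 2 ^ m ≤ 2 ^ (k - 1) := Nat.pow_le_pow_right (by norm_num) hmle
  have hklt : k - 1 < 2 ^ (k - 1) := Nat.lt_two_pow_self
  have h2k : 2 ^ k = 2 ^ (k - 1) + 2 ^ (k - 1) := by
    conv_lhs => rw [show k = (k - 1) + 1 by omega]
    rw [pow_succ]
    omega
  omega

/-- For every `k ≥ 1` there is a connected graph with metric dimension exactly `k`
containing `K_{2^k}` as a subgraph. -/
theorem stmt_4 (k : ℕ) (hk : 1 ≤ k) :
    ∃ (V : Type) (_ : Fintype V) (G : SimpleGraph V),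
      G.Connected ∧ metricDim G = k ∧ ∃ s : Finset V, G.IsNClique (2 ^ k) s := by
  classical
  refine ⟨VK k, inferInstance, GK k, gk_connected, ?_, ?_⟩
  · have hmem : k ∈ {n | ∃ S : Finset (VK k), S.card = n ∧ IsResolvingSet (GK k) (S : Set (VK k))} := by
      refine ⟨Finset.univ.image (Sum.inr : Fin k → VK k), ?_, gk_resolving⟩
      rw [Finset.card_image_of_injective _ Sum.inr_injective]
      simp
    refine le_antisymm (Nat.sInf_le hmem) (le_csInf ⟨k, hmem⟩ ?_)
    rintro n ⟨S, hScard, hSres⟩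
    exact hScard ▸ gk_lower S hSres
  · refine ⟨Finset.univ.image (Sum.inl : (Fin k → Bool) → VK k), ?_, ?_⟩
    · intro x hx y hy hxy
      simp only [Finset.coe_image, Set.mem_image, Finset.coe_univ, Set.image_univ,
        Set.mem_range] at hx hy
      obtain ⟨v, rfl⟩ := hx
      obtain ⟨w, rfl⟩ := hy
      exact gk_adj_inl_inl (fun he => hxy (by rw [he]))
    · rw [Finset.card_image_of_injective _ Sum.inl_injective]
      simp [Fintype.card_fun]

end Main
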